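/- arXiv:1808.04159 — 2 statements merged into one kernel-verified Lean document; each statement's English description precedes it below -/
import Mathlib

section
/- Let m ∈ ℕ, s ∈ (m, m+1], and f ∈ 𝒞^s(Ω) with inf_{x∈Ω} |f(x)| ≥ c₀ > 0. Then 1/f ∈ 𝒞^s(Ω), and ‖1/f‖_{𝒞^s(Ω)} ≤ C, where C depends only on m, n, c₀, and an upper bound for ‖f‖_{𝒞^s(Ω)}. -/
open Set Metric ENNReal

noncomputable section

variable {E F : Type*} [NormedAddCommGroup E] [NormedSpace ℝ E]
  [NormedAddCommGroup F] [NormedSpace ℝ F]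

/-- The Hölder norm `‖f‖_{C^{0,s}(Ω)} = sup_Ω ‖f‖ + sup_{x≠y} ‖x-y‖^{-s}‖f x - f y‖`,
valued in `ℝ≥0∞`. -/
noncomputable def holderNorm (s : ℝ) (Ω : Set E) (f : E → F) : ℝ≥0∞ :=
  (⨆ x ∈ Ω, ENNReal.ofReal ‖f x‖) +
    ⨆ (x ∈ Ω) (y ∈ Ω) (_ : x ≠ y), ENNReal.ofReal (‖f x - f y‖ / ‖x - y‖ ^ s)

/-- The second-difference (Zygmund) seminorm
`sup_{h ≠ 0, x, x+h, x+2h ∈ Ω} |h|^{-s} ‖f(x+2h) - 2 f(x+h) + f x‖`. -/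
noncomputable def secondDiff (s : ℝ) (Ω : Set E) (f : E → F) : ℝ≥0∞ :=
  ⨆ (x : E) (h : E) (_ : h ≠ 0) (_ : x ∈ Ω) (_ : x + h ∈ Ω) (_ : x + 2 • h ∈ Ω),
    ENNReal.ofReal (‖f (x + 2 • h) - 2 • f (x + h) + f x‖ / ‖h‖ ^ s)

/-- The Zygmund norm of order `s ∈ (0,1]`:
`‖f‖_{𝒞^s(Ω)} = ‖f‖_{C^{0,s/2}(Ω)} + second difference seminorm`. -/
noncomputable def zygBase (s : ℝ) (Ω : Set E) (f : E → F) : ℝ≥0∞ :=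
  holderNorm (s / 2) Ω f + secondDiff s Ω f

/-- The Hölder norm `‖f‖_{C^{m,s}(Ω)} = Σ_{|α| ≤ m} ‖∂^α f‖_{C^{0,s}(Ω)}`, where
derivatives of order `i` are packaged as the full `i`-th derivative. -/
noncomputable def holderCm (m : ℕ) (s : ℝ) (Ω : Set E) (f : E → F) : ℝ≥0∞ :=
  ∑ i ∈ Finset.range (m + 1), holderNorm s Ω (iteratedFDerivWithin ℝ i f Ω)

/-- The Zygmund norm of order `s > 0`: writing `s = m + σ` with `m ∈ ℕ`, `σ ∈ (0,1]`,
`‖f‖_{𝒞^s(Ω)} = Σ_{|α| ≤ m} ‖∂^α f‖_{𝒞^σ(Ω)}`. -/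
noncomputable def zygNorm (s : ℝ) (Ω : Set E) (f : E → F) : ℝ≥0∞ :=
  ∑ i ∈ Finset.range ⌈s⌉₊, zygBase (s - (⌈s⌉₊ - 1 : ℕ)) Ω (iteratedFDerivWithin ℝ i f Ω)

/-- Membership in the Zygmund space `𝒞^s(Ω)`. -/
def MemZyg (s : ℝ) (Ω : Set E) (f : E → F) : Prop :=
  ContDiffOn ℝ (⌈s⌉₊ - 1 : ℕ) f Ω ∧ zygNorm s Ω f ≠ ⊤

end
set_option linter.unusedSectionVars false
set_option maxHeartbeats 1000000

section Zaux
variable {E : Type*} [NormedAddCommGroup E] [NormedSpace ℝ E]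
variable {Ω : Set E} {σ : ℝ} {f : E → ℝ} {K K' M A c₀ : ℝ} {m : ℕ}

/-- Scalar "Zygmund-good" bounds with constant `K`. -/
def GoodB (σ : ℝ) (Ω : Set E) (K : ℝ) (u : E → ℝ) : Prop :=
  (∀ x ∈ Ω, |u x| ≤ K) ∧
  (∀ x ∈ Ω, ∀ y ∈ Ω, |u x - u y| ≤ K * ‖x - y‖ ^ (σ / 2)) ∧
  (∀ x h : E, h ≠ 0 → x ∈ Ω → x + h ∈ Ω → x + 2 • h ∈ Ω →
    |u (x + 2 • h) - 2 * u (x + h) + u x| ≤ K * ‖h‖ ^ σ)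

lemma GoodB.mono {u : E → ℝ} (hKK : K ≤ K') (h : GoodB σ Ω K u) : GoodB σ Ω K' u := by
  obtain ⟨h1, h2, h3⟩ := h
  refine ⟨fun x hx => (h1 x hx).trans hKK, fun x hx y hy => (h2 x hx y hy).trans ?_,
    fun x hh hne hx h1' h2' => (h3 x hh hne hx h1' h2').trans ?_⟩
  · exact mul_le_mul_of_nonneg_right hKK (Real.rpow_nonneg (norm_nonneg _) _)
  · exact mul_le_mul_of_nonneg_right hKK (Real.rpow_nonneg (norm_nonneg _) _)

lemma GoodB.neg {u : E → ℝ} (h : GoodB σ Ω K u) : GoodB σ Ω K (fun x => -u x) := by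
  obtain ⟨h1, h2, h3⟩ := h
  refine ⟨fun x hx => by simpa using h1 x hx, fun x hx y hy => ?_, fun x hh hne hx h1' h2' => ?_⟩
  · have := h2 x hx y hy; rw [show -u x - -u y = -(u x - u y) by ring, abs_neg]; exact this
  · have := h3 x hh hne hx h1' h2'
    rw [show -u (x + 2 • hh) - 2 * -u (x + hh) + -u x
        = -(u (x + 2 • hh) - 2 * u (x + hh) + u x) by ring, abs_neg]
    exact this

lemma GoodB.add {u w : E → ℝ} (hu : GoodB σ Ω K u) (hw : GoodB σ Ω K' w) :
    GoodB σ Ω (K + K') (fun x => u x + w x) := by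
  obtain ⟨u1, u2, u3⟩ := hu; obtain ⟨w1, w2, w3⟩ := hw
  refine ⟨fun x hx => ?_, fun x hx y hy => ?_, fun x hh hne hx h1' h2' => ?_⟩
  · exact (abs_add_le _ _).trans (add_le_add (u1 x hx) (w1 x hx))
  · calc |u x + w x - (u y + w y)| = |(u x - u y) + (w x - w y)| := by ring_nf
      _ ≤ |u x - u y| + |w x - w y| := abs_add_le _ _
      _ ≤ K * ‖x - y‖ ^ (σ / 2) + K' * ‖x - y‖ ^ (σ / 2) := add_le_add (u2 x hx y hy) (w2 x hx y hy)
      _ = (K + K') * ‖x - y‖ ^ (σ / 2) := by ring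
  · calc |u (x + 2 • hh) + w (x + 2 • hh) - 2 * (u (x + hh) + w (x + hh)) + (u x + w x)|
        = |(u (x + 2 • hh) - 2 * u (x + hh) + u x) + (w (x + 2 • hh) - 2 * w (x + hh) + w x)| := by
          ring_nf
      _ ≤ |u (x + 2 • hh) - 2 * u (x + hh) + u x| + |w (x + 2 • hh) - 2 * w (x + hh) + w x| :=
          abs_add_le _ _
      _ ≤ K * ‖hh‖ ^ σ + K' * ‖hh‖ ^ σ :=
          add_le_add (u3 x hh hne hx h1' h2') (w3 x hh hne hx h1' h2')
      _ = (K + K') * ‖hh‖ ^ σ := by ring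


lemma rpow_half_sq {σ : ℝ} (h : E) (hh : h ≠ 0) :
    ‖h‖ ^ (σ / 2) * ‖h‖ ^ (σ / 2) = ‖h‖ ^ σ := by
  rw [← Real.rpow_add (norm_pos_iff.mpr hh)]; ring_nf

lemma norm_sub_two_smul (x h : E) : ‖x + 2 • h - x‖ ≤ 2 * ‖h‖ := by
  have : x + 2 • h - x = h + h := by rw [two_smul]; abel
  rw [this]
  calc ‖h + h‖ ≤ ‖h‖ + ‖h‖ := norm_add_le _ _
    _ = 2 * ‖h‖ := by ring

lemma rpow_two_norm_le {σ : ℝ} (hσ : 0 < σ) (hσ1 : σ ≤ 1) (x h : E) :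
    ‖x + 2 • h - x‖ ^ (σ / 2) ≤ 2 * ‖h‖ ^ (σ / 2) := by
  calc ‖x + 2 • h - x‖ ^ (σ / 2) ≤ (2 * ‖h‖) ^ (σ / 2) :=
        Real.rpow_le_rpow (norm_nonneg _) (norm_sub_two_smul x h) (by linarith)
    _ = (2 : ℝ) ^ (σ / 2) * ‖h‖ ^ (σ / 2) := Real.mul_rpow (by norm_num) (norm_nonneg _)
    _ ≤ 2 * ‖h‖ ^ (σ / 2) := by
        have h2 : (2 : ℝ) ^ (σ / 2) ≤ 2 ^ (1 : ℝ) :=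
          Real.rpow_le_rpow_of_exponent_le one_le_two (by linarith)
        rw [Real.rpow_one] at h2
        exact mul_le_mul_of_nonneg_right h2 (Real.rpow_nonneg (norm_nonneg _) _)

lemma GoodB.mul {u w : E → ℝ} (hσ : 0 < σ) (hσ1 : σ ≤ 1) (hK : 0 ≤ K) (hK' : 0 ≤ K')
    (hu : GoodB σ Ω K u) (hw : GoodB σ Ω K' w) :
    GoodB σ Ω (8 * K * K') (fun x => u x * w x) := by
  obtain ⟨u1, u2, u3⟩ := hu; obtain ⟨w1, w2, w3⟩ := hw
  refine ⟨fun x hx => ?_, fun x hx y hy => ?_, fun x hh hne hx hx1 hx2 => ?_⟩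
  · rw [abs_mul]
    calc |u x| * |w x| ≤ K * K' := mul_le_mul (u1 x hx) (w1 x hx) (abs_nonneg _) hK
      _ ≤ 8 * K * K' := by nlinarith
  · set d := ‖x - y‖ ^ (σ / 2) with hd
    have hd0 : 0 ≤ d := Real.rpow_nonneg (norm_nonneg _) _
    have key : u x * w x - u y * w y = u x * (w x - w y) + w y * (u x - u y) := by ring
    rw [key]
    have b1 : |u x * (w x - w y)| ≤ K * (K' * d) := by
      rw [abs_mul]
      exact mul_le_mul (u1 x hx) (w2 x hx y hy) (abs_nonneg _) hK
    have b2 : |w y * (u x - u y)| ≤ K' * (K * d) := by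
      rw [abs_mul]
      exact mul_le_mul (w1 y hy) (u2 x hx y hy) (abs_nonneg _) hK'
    calc |u x * (w x - w y) + w y * (u x - u y)| ≤ _ + _ := abs_add_le _ _
      _ ≤ K * (K' * d) + K' * (K * d) := add_le_add b1 b2
      _ ≤ 8 * K * K' * d := by nlinarith [mul_nonneg hK hK']
  · set d := ‖hh‖ ^ (σ / 2) with hd
    have hd0 : 0 ≤ d := Real.rpow_nonneg (norm_nonneg _) _
    have hdd : d * d = ‖hh‖ ^ σ := rpow_half_sq hh hne
    set x0 := x with hx0
    set x1 := x + hh with hx1e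
    set x2 := x + 2 • hh with hx2e
    have key : u x2 * w x2 - 2 * (u x1 * w x1) + u x0 * w x0 =
        u x0 * (w x2 - 2 * w x1 + w x0) + w x0 * (u x2 - 2 * u x1 + u x0)
          + (u x2 - u x0) * (w x2 - w x0) - 2 * ((u x1 - u x0) * (w x1 - w x0)) := by ring
    rw [key]
    have hu20 : |u x2 - u x0| ≤ K * (2 * d) := by
      calc |u x2 - u x0| ≤ K * ‖x2 - x0‖ ^ (σ / 2) := u2 x2 hx2 x0 hx
        _ ≤ K * (2 * d) := by
            have := rpow_two_norm_le hσ hσ1 x hh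
            exact mul_le_mul_of_nonneg_left this hK
    have hw20 : |w x2 - w x0| ≤ K' * (2 * d) := by
      calc |w x2 - w x0| ≤ K' * ‖x2 - x0‖ ^ (σ / 2) := w2 x2 hx2 x0 hx
        _ ≤ K' * (2 * d) := by
            have := rpow_two_norm_le hσ hσ1 x hh
            exact mul_le_mul_of_nonneg_left this hK'
    have hu10 : |u x1 - u x0| ≤ K * d := by
      have := u2 x1 hx1 x0 hx
      simpa [hx1e, hx0] using this
    have hw10 : |w x1 - w x0| ≤ K' * d := by
      have := w2 x1 hx1 x0 hx
      simpa [hx1e, hx0] using this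
    have b1 : |u x0 * (w x2 - 2 * w x1 + w x0)| ≤ K * (K' * (d * d)) := by
      rw [abs_mul, hdd]
      exact mul_le_mul (u1 x0 hx) (w3 x hh hne hx hx1 hx2) (abs_nonneg _) hK
    have b2 : |w x0 * (u x2 - 2 * u x1 + u x0)| ≤ K' * (K * (d * d)) := by
      rw [abs_mul, hdd]
      exact mul_le_mul (w1 x0 hx) (u3 x hh hne hx hx1 hx2) (abs_nonneg _) hK'
    have b3 : |(u x2 - u x0) * (w x2 - w x0)| ≤ (K * (2 * d)) * (K' * (2 * d)) := by
      rw [abs_mul]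
      exact mul_le_mul hu20 hw20 (abs_nonneg _) (by positivity)
    have b4 : |(u x1 - u x0) * (w x1 - w x0)| ≤ (K * d) * (K' * d) := by
      rw [abs_mul]
      exact mul_le_mul hu10 hw10 (abs_nonneg _) (by positivity)
    have e1 := abs_le.mp b1; have e2 := abs_le.mp b2
    have e3 := abs_le.mp b3; have e4 := abs_le.mp b4
    rw [← hdd, abs_le]
    constructor <;> linarith [e1.1, e1.2, e2.1, e2.2, e3.1, e3.2, e4.1, e4.2]


lemma goodB_inv (hσ : 0 < σ) (hσ1 : σ ≤ 1) (hc₀ : 0 < c₀) (hM : 0 ≤ M)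
    (hf1 : ∀ x ∈ Ω, |f x| ≤ M)
    (hf2 : ∀ x ∈ Ω, ∀ y ∈ Ω, |f x - f y| ≤ M * ‖x - y‖ ^ (σ / 2))
    (hf3 : ∀ x h : E, h ≠ 0 → x ∈ Ω → x + h ∈ Ω → x + 2 • h ∈ Ω →
      |f (x + 2 • h) - 2 * f (x + h) + f x| ≤ M * ‖h‖ ^ σ)
    (hc : ∀ x ∈ Ω, c₀ ≤ |f x|) :
    GoodB σ Ω (1 / c₀ + M / c₀ ^ 2 + 3 * M ^ 2 / c₀ ^ 3) (fun x => (f x)⁻¹) := by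
  have hKs : 0 ≤ M / c₀ ^ 2 := by positivity
  have hKs2 : 0 ≤ 3 * M ^ 2 / c₀ ^ 3 := by positivity
  have hKs3 : 0 ≤ 1 / c₀ := by positivity
  refine ⟨fun x hx => ?_, fun x hx y hy => ?_, fun x h hne hx hx1 hx2 => ?_⟩
  · have h1 : c₀ ≤ |f x| := hc x hx
    have : |(f x)⁻¹| = |f x|⁻¹ := abs_inv _
    rw [this]
    have : |f x|⁻¹ ≤ c₀⁻¹ := inv_anti₀ hc₀ h1
    calc |f x|⁻¹ ≤ c₀⁻¹ := this
      _ = 1 / c₀ := (one_div c₀).symm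
      _ ≤ 1 / c₀ + M / c₀ ^ 2 + 3 * M ^ 2 / c₀ ^ 3 := by linarith
  · have hax : c₀ ≤ |f x| := hc x hx
    have hay : c₀ ≤ |f y| := hc y hy
    have hx0 : f x ≠ 0 := by intro h0; rw [h0] at hax; simp at hax; linarith
    have hy0 : f y ≠ 0 := by intro h0; rw [h0] at hay; simp at hay; linarith
    have key : (f x)⁻¹ - (f y)⁻¹ = (f y - f x) / (f x * f y) := by field_simp
    rw [key, abs_div]
    set d := ‖x - y‖ ^ (σ / 2) with hd
    have hd0 : 0 ≤ d := Real.rpow_nonneg (norm_nonneg _) _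
    have hnum0 : |f y - f x| ≤ M * d := by rw [abs_sub_comm]; exact hf2 x hx y hy
    have hden0 : c₀ ^ 2 ≤ |f x * f y| := by
      rw [abs_mul]
      calc c₀ ^ 2 = c₀ * c₀ := sq c₀
        _ ≤ |f x| * |f y| := mul_le_mul hax hay (le_of_lt hc₀) (abs_nonneg _)
    calc |f y - f x| / |f x * f y| ≤ (M * d) / c₀ ^ 2 :=
          div_le_div₀ (by positivity) hnum0 (by positivity) hden0
      _ = M / c₀ ^ 2 * d := by ring
      _ ≤ (1 / c₀ + M / c₀ ^ 2 + 3 * M ^ 2 / c₀ ^ 3) * d := by nlinarith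
  · set a0 := f x with ha0
    set a1 := f (x + h) with ha1
    set a2 := f (x + 2 • h) with ha2
    have hc0' : c₀ ≤ |a0| := hc x hx
    have hc1' : c₀ ≤ |a1| := hc _ hx1
    have hc2' : c₀ ≤ |a2| := hc _ hx2
    have h0 : a0 ≠ 0 := fun h0 => by rw [h0] at hc0'; simp at hc0'; linarith
    have h1 : a1 ≠ 0 := fun h0 => by rw [h0] at hc1'; simp at hc1'; linarith
    have h2 : a2 ≠ 0 := fun h0 => by rw [h0] at hc2'; simp at hc2'; linarith
    set d := ‖h‖ ^ (σ / 2) with hd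
    have hd0 : 0 ≤ d := Real.rpow_nonneg (norm_nonneg _) _
    have hdd : d * d = ‖h‖ ^ σ := rpow_half_sq h hne
    have hs0 : 0 ≤ ‖h‖ ^ σ := Real.rpow_nonneg (norm_nonneg _) _
    have key : a2⁻¹ - 2 * a1⁻¹ + a0⁻¹ =
        (-(a1 * (a2 - 2 * a1 + a0)) + 2 * ((a1 - a0) * (a2 - a1))) / (a0 * a1 * a2) := by
      field_simp; ring
    show |a2⁻¹ - 2 * a1⁻¹ + a0⁻¹| ≤ _
    rw [key, abs_div]
    have hDD : |a2 - 2 * a1 + a0| ≤ M * ‖h‖ ^ σ := hf3 x h hne hx hx1 hx2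
    have h10 : |a1 - a0| ≤ M * d := by
      have := hf2 (x + h) hx1 x hx
      simpa [ha1, ha0] using this
    have h21 : |a2 - a1| ≤ M * d := by
      have := hf2 (x + 2 • h) hx2 (x + h) hx1
      have heq : x + 2 • h - (x + h) = h := by rw [two_smul]; abel
      rw [heq] at this
      exact this
    have t1 : |a1 * (a2 - 2 * a1 + a0)| ≤ M * (M * ‖h‖ ^ σ) := by
      rw [abs_mul]
      exact mul_le_mul (hf1 _ hx1) hDD (abs_nonneg _) hM
    have t2 : |(a1 - a0) * (a2 - a1)| ≤ (M * d) * (M * d) := by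
      rw [abs_mul]
      exact mul_le_mul h10 h21 (abs_nonneg _) (by positivity)
    have hnum : |-(a1 * (a2 - 2 * a1 + a0)) + 2 * ((a1 - a0) * (a2 - a1))| ≤
        M * (M * ‖h‖ ^ σ) + 2 * ((M * d) * (M * d)) := by
      calc |-(a1 * (a2 - 2 * a1 + a0)) + 2 * ((a1 - a0) * (a2 - a1))|
          ≤ |-(a1 * (a2 - 2 * a1 + a0))| + |2 * ((a1 - a0) * (a2 - a1))| := abs_add_le _ _
        _ = |a1 * (a2 - 2 * a1 + a0)| + 2 * |(a1 - a0) * (a2 - a1)| := by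
            rw [abs_neg, abs_mul, abs_mul, abs_two]
        _ ≤ M * (M * ‖h‖ ^ σ) + 2 * ((M * d) * (M * d)) := by linarith
    have hden : c₀ ^ 3 ≤ |a0 * a1 * a2| := by
      rw [abs_mul, abs_mul]
      calc c₀ ^ 3 = c₀ * c₀ * c₀ := by ring
        _ ≤ |a0| * |a1| * |a2| := by
            apply mul_le_mul _ hc2' (le_of_lt hc₀) (by positivity)
            exact mul_le_mul hc0' hc1' (le_of_lt hc₀) (abs_nonneg _)
    calc |-(a1 * (a2 - 2 * a1 + a0)) + 2 * ((a1 - a0) * (a2 - a1))| / |a0 * a1 * a2|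
        ≤ (M * (M * ‖h‖ ^ σ) + 2 * ((M * d) * (M * d))) / c₀ ^ 3 :=
          div_le_div₀ (by positivity) hnum (by positivity) hden
      _ = (3 * M ^ 2 / c₀ ^ 3) * ‖h‖ ^ σ := by
          rw [← hdd]; field_simp; ring
      _ ≤ (1 / c₀ + M / c₀ ^ 2 + 3 * M ^ 2 / c₀ ^ 3) * ‖h‖ ^ σ := by nlinarith

inductive ZExpr (E : Type*) where
  | elemF (j : ℕ) (vs : Fin j → E)
  | elemG
  | mul (a b : ZExpr E)
  | add (a b : ZExpr E)
  | neg (a : ZExpr E)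

namespace ZExpr

noncomputable def eval (f : E → ℝ) (Ω : Set E) : ZExpr E → E → ℝ
  | elemF j vs => fun x => iteratedFDerivWithin ℝ j f Ω x vs
  | elemG => fun x => (f x)⁻¹
  | mul a b => fun x => a.eval f Ω x * b.eval f Ω x
  | add a b => fun x => a.eval f Ω x + b.eval f Ω x
  | neg a => fun x => -a.eval f Ω x

def W (A : ℝ) : ZExpr E → ℝ
  | elemF _ _ => A
  | elemG => A
  | mul a b => 8 * a.W A * b.W A
  | add a b => a.W A + b.W A
  | neg a => a.W A

def ord : ZExpr E → ℕ
  | elemF j _ => j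
  | elemG => 0
  | mul a b => max a.ord b.ord
  | add a b => max a.ord b.ord
  | neg a => a.ord

def wf (m : ℕ) : ZExpr E → Prop
  | elemF j vs => j ≤ m ∧ ∀ k, ‖vs k‖ = 1
  | elemG => True
  | mul a b => a.wf m ∧ b.wf m
  | add a b => a.wf m ∧ b.wf m
  | neg a => a.wf m

def d (v : E) : ZExpr E → ZExpr E
  | elemF j vs => elemF (j + 1) (Fin.cons v vs)
  | elemG => neg (mul elemG (mul elemG (elemF 1 (fun _ => v))))
  | mul a b => add (mul (a.d v) b) (mul a (b.d v))
  | add a b => add (a.d v) (b.d v)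
  | neg a => neg (a.d v)

lemma W_ge_one (hA : 1 ≤ A) : ∀ e : ZExpr E, 1 ≤ e.W A
  | elemF _ _ => hA
  | elemG => hA
  | mul a b => by
      have ha := W_ge_one hA a; have hb := W_ge_one hA b
      simp only [W]; nlinarith
  | add a b => by
      have ha := W_ge_one hA a; have hb := W_ge_one hA b
      simp only [W]; linarith
  | neg a => W_ge_one hA a

lemma W_d_le (hA : 1 ≤ A) (v : E) : ∀ e : ZExpr E, (e.d v).W A ≤ 64 * A * (e.W A) ^ 2
  | elemF j vs => by simp only [d, W]; nlinarith
  | elemG => by simp only [d, W]; nlinarith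
  | mul a b => by
      have ha := W_d_le hA v a; have hb := W_d_le hA v b
      have ha1 := W_ge_one hA a; have hb1 := W_ge_one hA b
      simp only [d, W]
      set Wa := a.W A; set Wb := b.W A
      set Da := (a.d v).W A; set Db := (b.d v).W A
      have hb2 : Wb ≤ Wb ^ 2 := by nlinarith
      have ha2 : Wa ≤ Wa ^ 2 := by nlinarith
      have hA0 : (0:ℝ) ≤ A := by linarith
      have k1 : Da * Wb ≤ 64 * A * Wa ^ 2 * Wb ^ 2 := by
        calc Da * Wb ≤ (64 * A * Wa ^ 2) * Wb :=
              mul_le_mul_of_nonneg_right ha (by linarith)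
          _ ≤ (64 * A * Wa ^ 2) * Wb ^ 2 :=
              mul_le_mul_of_nonneg_left hb2 (by positivity)
      have k2 : Wa * Db ≤ 64 * A * Wa ^ 2 * Wb ^ 2 := by
        calc Wa * Db ≤ Wa * (64 * A * Wb ^ 2) :=
              mul_le_mul_of_nonneg_left hb (by linarith)
          _ = (64 * A * Wb ^ 2) * Wa := by ring
          _ ≤ (64 * A * Wb ^ 2) * Wa ^ 2 :=
              mul_le_mul_of_nonneg_left ha2 (by positivity)
          _ = 64 * A * Wa ^ 2 * Wb ^ 2 := by ring
      nlinarith [mul_nonneg (mul_nonneg hA0 (sq_nonneg Wa)) (sq_nonneg Wb)]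
  | add a b => by
      have ha := W_d_le hA v a; have hb := W_d_le hA v b
      have ha1 := W_ge_one hA a; have hb1 := W_ge_one hA b
      simp only [d, W]
      nlinarith [mul_le_mul ha1 hb1 (by norm_num) (by linarith)]
  | neg a => W_d_le hA v a

lemma ord_d_le (v : E) : ∀ e : ZExpr E, (e.d v).ord ≤ e.ord + 1
  | elemF j vs => le_refl _
  | elemG => by simp [d, ord]
  | mul a b => by
      have ha := ord_d_le v a; have hb := ord_d_le v b
      simp only [d, ord]; omega
  | add a b => by
      have ha := ord_d_le v a; have hb := ord_d_le v b
      simp only [d, ord]; omega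
  | neg a => ord_d_le v a

lemma wf_d {v : E} (hv : ‖v‖ = 1) :
    ∀ e : ZExpr E, e.wf m → e.ord + 1 ≤ m → (e.d v).wf m
  | elemF j vs, hwf, hord => by
      refine ⟨by simpa [ord] using hord, ?_⟩
      intro k
      refine Fin.cases ?_ ?_ k
      · simpa using hv
      · intro i; simpa using hwf.2 i
  | elemG, hwf, hord => by
      refine ⟨trivial, ⟨trivial, ⟨by simpa [ord] using hord, fun k => hv⟩⟩⟩
  | mul a b, hwf, hord => by
      have h1 : a.ord + 1 ≤ m := by simp only [ord] at hord; omega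
      have h2 : b.ord + 1 ≤ m := by simp only [ord] at hord; omega
      exact ⟨⟨wf_d hv a hwf.1 h1, hwf.2⟩, ⟨hwf.1, wf_d hv b hwf.2 h2⟩⟩
  | add a b, hwf, hord => by
      have h1 : a.ord + 1 ≤ m := by simp only [ord] at hord; omega
      have h2 : b.ord + 1 ≤ m := by simp only [ord] at hord; omega
      exact ⟨wf_d hv a hwf.1 h1, wf_d hv b hwf.2 h2⟩
  | neg a, hwf, hord => wf_d hv a hwf hord

end ZExpr

/-- The constants controlling the Zygmund bounds of the derivatives of `f⁻¹`. -/
noncomputable def zygK (A : ℝ) : ℕ → ℝ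
  | 0 => A
  | i + 1 => 64 * A * zygK A i ^ 2

lemma zygK_ge_one {A : ℝ} (hA : 1 ≤ A) : ∀ i, 1 ≤ zygK A i
  | 0 => hA
  | i + 1 => by
      have := zygK_ge_one hA i
      simp only [zygK]; nlinarith

lemma zygK_mono {A : ℝ} (hA : 1 ≤ A) {i j : ℕ} (hij : i ≤ j) : zygK A i ≤ zygK A j := by
  induction j, hij using Nat.le_induction with
  | base => exact le_refl _
  | succ k hk ih =>
      have h2 := zygK_ge_one hA k
      calc zygK A i ≤ zygK A k := ih
        _ ≤ 64 * A * zygK A k ^ 2 := by nlinarith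
        _ = zygK A (k + 1) := rfl

lemma prod_norm_one {j : ℕ} {vs : Fin j → E} (h : ∀ k, ‖vs k‖ = 1) :
    ∏ k, ‖vs k‖ = 1 :=
  Finset.prod_eq_one fun k _ => h k

lemma cmm_apply_abs_le {j : ℕ} (T : ContinuousMultilinearMap ℝ (fun _ : Fin j => E) ℝ)
    {vs : Fin j → E} (h : ∀ k, ‖vs k‖ = 1) : |T vs| ≤ ‖T‖ := by
  have := T.le_opNorm vs
  rw [prod_norm_one h, mul_one] at this
  simpa [Real.norm_eq_abs] using this

lemma ZExpr.good (hσ : 0 < σ) (hσ1 : σ ≤ 1) (hM : 0 ≤ M) (hA1 : 1 ≤ A) (hMA : M ≤ A)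
    (h1 : ∀ j, j ≤ m → ∀ x ∈ Ω, ‖iteratedFDerivWithin ℝ j f Ω x‖ ≤ M)
    (h2 : ∀ j, j ≤ m → ∀ x ∈ Ω, ∀ y ∈ Ω,
      ‖iteratedFDerivWithin ℝ j f Ω x - iteratedFDerivWithin ℝ j f Ω y‖ ≤ M * ‖x - y‖ ^ (σ / 2))
    (h3 : ∀ j, j ≤ m → ∀ x h : E, h ≠ 0 → x ∈ Ω → x + h ∈ Ω → x + 2 • h ∈ Ω →
      ‖iteratedFDerivWithin ℝ j f Ω (x + 2 • h) - 2 • iteratedFDerivWithin ℝ j f Ω (x + h)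
        + iteratedFDerivWithin ℝ j f Ω x‖ ≤ M * ‖h‖ ^ σ)
    (hGg : GoodB σ Ω A (fun x => (f x)⁻¹)) :
    ∀ e : ZExpr E, e.wf m → GoodB σ Ω (e.W A) (e.eval f Ω)
  | ZExpr.elemF j vs, hwf => by
      simp only [ZExpr.W, ZExpr.eval]
      refine ⟨fun x hx => ?_, fun x hx y hy => ?_, fun x h hne hx hx1 hx2 => ?_⟩
      · exact (cmm_apply_abs_le _ hwf.2).trans ((h1 j hwf.1 x hx).trans hMA)
      · have key : iteratedFDerivWithin ℝ j f Ω x vs - iteratedFDerivWithin ℝ j f Ω y vs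
            = (iteratedFDerivWithin ℝ j f Ω x - iteratedFDerivWithin ℝ j f Ω y) vs := by
          simp
        rw [key]
        refine (cmm_apply_abs_le _ hwf.2).trans ?_
        refine (h2 j hwf.1 x hx y hy).trans ?_
        exact mul_le_mul_of_nonneg_right hMA (Real.rpow_nonneg (norm_nonneg _) _)
      · have key : iteratedFDerivWithin ℝ j f Ω (x + 2 • h) vs
            - 2 * iteratedFDerivWithin ℝ j f Ω (x + h) vs + iteratedFDerivWithin ℝ j f Ω x vs
            = (iteratedFDerivWithin ℝ j f Ω (x + 2 • h) - 2 • iteratedFDerivWithin ℝ j f Ω (x + h)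
              + iteratedFDerivWithin ℝ j f Ω x) vs := by
          simp [two_smul, two_mul]
        rw [key]
        refine (cmm_apply_abs_le _ hwf.2).trans ?_
        refine (h3 j hwf.1 x h hne hx hx1 hx2).trans ?_
        exact mul_le_mul_of_nonneg_right hMA (Real.rpow_nonneg (norm_nonneg _) _)
  | ZExpr.elemG, _ => hGg
  | ZExpr.mul a b, hwf => by
      have ha := ZExpr.good hσ hσ1 hM hA1 hMA h1 h2 h3 hGg a hwf.1
      have hb := ZExpr.good hσ hσ1 hM hA1 hMA h1 h2 h3 hGg b hwf.2
      have ha0 : (0:ℝ) ≤ a.W A := by linarith [ZExpr.W_ge_one hA1 a]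
      have hb0 : (0:ℝ) ≤ b.W A := by linarith [ZExpr.W_ge_one hA1 b]
      exact GoodB.mul hσ hσ1 ha0 hb0 ha hb
  | ZExpr.add a b, hwf => by
      have ha := ZExpr.good hσ hσ1 hM hA1 hMA h1 h2 h3 hGg a hwf.1
      have hb := ZExpr.good hσ hσ1 hM hA1 hMA h1 h2 h3 hGg b hwf.2
      exact GoodB.add ha hb
  | ZExpr.neg a, hwf => GoodB.neg (ZExpr.good hσ hσ1 hM hA1 hMA h1 h2 h3 hGg a hwf)


lemma ZExpr.deriv (hΩ : IsOpen Ω) (hf : ContDiffOn ℝ m f Ω) (hf0 : ∀ x ∈ Ω, f x ≠ 0) :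
    ∀ e : ZExpr E, e.ord + 1 ≤ m →
      DifferentiableOn ℝ (e.eval f Ω) Ω ∧
      ∀ x ∈ Ω, ∀ v : E, fderivWithin ℝ (e.eval f Ω) Ω x v = (e.d v).eval f Ω x
  | ZExpr.elemF j vs, he => by
      simp only [ZExpr.ord] at he
      have hdiff : DifferentiableOn ℝ (iteratedFDerivWithin ℝ j f Ω) Ω :=
        hf.differentiableOn_iteratedFDerivWithin (by exact_mod_cast (by omega : j < m))
          hΩ.uniqueDiffOn
      set L := ContinuousMultilinearMap.apply ℝ (fun _ : Fin j => E) ℝ vs with hL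
      have heq : ZExpr.eval f Ω (ZExpr.elemF j vs) = L ∘ iteratedFDerivWithin ℝ j f Ω := rfl
      constructor
      · rw [heq]
        exact L.differentiable.comp_differentiableOn hdiff
      · intro x hx v
        have hcomp := fderiv_comp_fderivWithin (𝕜 := ℝ)
          (g := (L : ContinuousMultilinearMap ℝ (fun _ : Fin j => E) ℝ → ℝ))
          (f := iteratedFDerivWithin ℝ j f Ω) (s := Ω) (x := x)
          L.differentiableAt (hdiff x hx) (hΩ.uniqueDiffOn x hx)
        rw [heq, hcomp, ContinuousLinearMap.fderiv]
        have : (ZExpr.d v (ZExpr.elemF j vs)).eval f Ω x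
            = iteratedFDerivWithin ℝ (j + 1) f Ω x (Fin.cons v vs) := rfl
        rw [this, iteratedFDerivWithin_succ_apply_left]
        simp [L]
  | ZExpr.elemG, he => by
      simp only [ZExpr.ord] at he
      have h1m : (1 : ℕ) ≤ m := by omega
      have hfd : DifferentiableOn ℝ f Ω := hf.differentiableOn (by exact_mod_cast (show m ≠ 0 by omega))
      have heq : ZExpr.eval f Ω ZExpr.elemG = (fun y : ℝ => y⁻¹) ∘ f := rfl
      constructor
      · exact hfd.inv hf0
      · intro x hx v
        have hcomp := fderiv_comp_fderivWithin (𝕜 := ℝ)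
          (g := fun y : ℝ => y⁻¹) (f := f) (s := Ω) (x := x)
          (hasFDerivAt_inv (hf0 x hx)).differentiableAt (hfd x hx) (hΩ.uniqueDiffOn x hx)
        rw [heq, hcomp, fderiv_inv]
        simp only [ContinuousLinearMap.coe_comp', Function.comp_apply,
          ContinuousLinearMap.smulRight_apply, ContinuousLinearMap.one_apply, smul_eq_mul]
        have hone : iteratedFDerivWithin ℝ 1 f Ω x (fun _ => v) = fderivWithin ℝ f Ω x v :=
          iteratedFDerivWithin_one_apply (hΩ.uniqueDiffOn x hx) _
        show _ = -((f x)⁻¹ * ((f x)⁻¹ * iteratedFDerivWithin ℝ 1 f Ω x (fun _ => v)))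
        rw [hone]
        have hfx := hf0 x hx
        rw [ContinuousLinearMap.toSpanSingleton_apply, smul_eq_mul]
        field_simp
  | ZExpr.mul a b, he => by
      simp only [ZExpr.ord] at he
      have ha := ZExpr.deriv hΩ hf hf0 a (by omega)
      have hb := ZExpr.deriv hΩ hf hf0 b (by omega)
      have heq : ZExpr.eval f Ω (ZExpr.mul a b)
          = fun x => a.eval f Ω x * b.eval f Ω x := rfl
      constructor
      · rw [heq]; exact ha.1.mul hb.1
      · intro x hx v
        rw [heq, fderivWithin_fun_mul (hΩ.uniqueDiffOn x hx) (ha.1 x hx) (hb.1 x hx)]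
        simp only [ContinuousLinearMap.add_apply, ContinuousLinearMap.smul_apply,
          smul_eq_mul]
        rw [ha.2 x hx v, hb.2 x hx v]
        show _ = (a.d v).eval f Ω x * b.eval f Ω x + a.eval f Ω x * (b.d v).eval f Ω x
        ring
  | ZExpr.add a b, he => by
      simp only [ZExpr.ord] at he
      have ha := ZExpr.deriv hΩ hf hf0 a (by omega)
      have hb := ZExpr.deriv hΩ hf hf0 b (by omega)
      have heq : ZExpr.eval f Ω (ZExpr.add a b)
          = fun x => a.eval f Ω x + b.eval f Ω x := rfl
      constructor
      · rw [heq]; exact ha.1.add hb.1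
      · intro x hx v
        rw [heq, fderivWithin_fun_add (hΩ.uniqueDiffOn x hx) (ha.1 x hx) (hb.1 x hx)]
        simp only [ContinuousLinearMap.add_apply]
        rw [ha.2 x hx v, hb.2 x hx v]
        rfl
  | ZExpr.neg a, he => by
      have ha := ZExpr.deriv hΩ hf hf0 a he
      have heq : ZExpr.eval f Ω (ZExpr.neg a) = fun x => -a.eval f Ω x := rfl
      constructor
      · rw [heq]; exact ha.1.neg
      · intro x hx v
        rw [heq, fderivWithin_fun_neg (hΩ.uniqueDiffOn x hx)]
        simp only [ContinuousLinearMap.neg_apply]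
        rw [ha.2 x hx v]
        rfl

lemma opNorm_le_of_unit {i : ℕ} (T : ContinuousMultilinearMap ℝ (fun _ : Fin i => E) ℝ) {C : ℝ}
    (hC : 0 ≤ C) (h : ∀ vs : Fin i → E, (∀ j, ‖vs j‖ = 1) → |T vs| ≤ C) : ‖T‖ ≤ C := by
  refine T.opNorm_le_bound hC fun vs => ?_
  by_cases hz : ∃ j, vs j = 0
  · obtain ⟨j, hj⟩ := hz
    rw [T.map_coord_zero j hj]
    have : (0:ℝ) ≤ ∏ k, ‖vs k‖ := Finset.prod_nonneg fun k _ => norm_nonneg _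
    simpa using mul_nonneg hC this
  · push_neg at hz
    set u : Fin i → E := fun j => ‖vs j‖⁻¹ • vs j with hu
    have hunit : ∀ j, ‖u j‖ = 1 := by
      intro j
      rw [hu]
      simp only [norm_smul, norm_inv, norm_norm]
      exact inv_mul_cancel₀ (norm_ne_zero_iff.mpr (hz j))
    have hvs : vs = fun j => ‖vs j‖ • u j := by
      funext j
      rw [hu]
      simp only [smul_smul]
      rw [mul_inv_cancel₀ (norm_ne_zero_iff.mpr (hz j)), one_smul]
    have hTv : T vs = (∏ j, ‖vs j‖) • T u := by
      conv_lhs => rw [hvs]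
      exact T.toMultilinearMap.map_smul_univ (fun j => ‖vs j‖) u
    rw [hTv, norm_smul]
    have hprod : ‖∏ j, ‖vs j‖‖ = ∏ j, ‖vs j‖ := by
      rw [Real.norm_eq_abs, abs_of_nonneg (Finset.prod_nonneg fun k _ => norm_nonneg _)]
    rw [hprod, mul_comm]
    refine mul_le_mul_of_nonneg_right ?_ (Finset.prod_nonneg fun k _ => norm_nonneg _)
    simpa [Real.norm_eq_abs] using h u hunit

/-- Main representation lemma: every directional iterated derivative of `f⁻¹` at unit vectors
is the evaluation of a well-formed expression with controlled weight. -/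
lemma inv_rep (hΩ : IsOpen Ω) (hf : ContDiffOn ℝ m f Ω) (hf0 : ∀ x ∈ Ω, f x ≠ 0)
    (hA1 : 1 ≤ A) :
    ∀ i, i ≤ m → ∀ vs : Fin i → E, (∀ k, ‖vs k‖ = 1) →
      ∃ e : ZExpr E, e.wf m ∧ e.ord ≤ i ∧ e.W A ≤ zygK A i ∧
        ∀ x ∈ Ω, e.eval f Ω x = iteratedFDerivWithin ℝ i (fun y => (f y)⁻¹) Ω x vs := by
  intro i
  induction i with
  | zero =>
      intro _ vs _
      refine ⟨ZExpr.elemG, trivial, le_refl _, le_of_eq rfl, fun x hx => ?_⟩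
      rw [iteratedFDerivWithin_zero_apply]
      rfl
  | succ i ih =>
      intro him vs hvs
      obtain ⟨e, hwf, hord, hW, heval⟩ := ih (by omega) (Fin.tail vs) (fun k => hvs k.succ)
      have hv0 : ‖vs 0‖ = 1 := hvs 0
      have hordm : e.ord + 1 ≤ m := by omega
      refine ⟨e.d (vs 0), ZExpr.wf_d hv0 e hwf hordm, ?_, ?_, ?_⟩
      · exact le_trans (ZExpr.ord_d_le (vs 0) e) (by omega)
      · refine le_trans (ZExpr.W_d_le hA1 (vs 0) e) ?_
        show 64 * A * e.W A ^ 2 ≤ 64 * A * zygK A i ^ 2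
        have h0 : (0:ℝ) ≤ e.W A := by linarith [ZExpr.W_ge_one hA1 e]
        have := pow_le_pow_left₀ h0 hW 2
        have hA0 : (0:ℝ) ≤ 64 * A := by linarith
        nlinarith
      · intro x hx
        have hg : ContDiffOn ℝ m (fun y => (f y)⁻¹) Ω := hf.inv hf0
        have hgdiff : DifferentiableOn ℝ (iteratedFDerivWithin ℝ i (fun y => (f y)⁻¹) Ω) Ω :=
          hg.differentiableOn_iteratedFDerivWithin (by exact_mod_cast (by omega : i < m))
            hΩ.uniqueDiffOn
        have hderiv := (ZExpr.deriv hΩ hf hf0 e hordm).2 x hx (vs 0)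
        -- `fderivWithin` of eval e equals that of the scalar directional derivative function
        have hcongr : fderivWithin ℝ (e.eval f Ω) Ω x
            = fderivWithin ℝ (fun y => iteratedFDerivWithin ℝ i (fun y => (f y)⁻¹) Ω y
                (Fin.tail vs)) Ω x := by
          apply fderivWithin_congr
          · intro y hy; exact heval y hy
          · exact heval x hx
        -- CLM apply trick
        set L := ContinuousMultilinearMap.apply ℝ (fun _ : Fin i => E) ℝ (Fin.tail vs) with hL
        have hcomp := fderiv_comp_fderivWithin (𝕜 := ℝ)
          (g := (L : ContinuousMultilinearMap ℝ (fun _ : Fin i => E) ℝ → ℝ))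
          (f := iteratedFDerivWithin ℝ i (fun y => (f y)⁻¹) Ω) (s := Ω) (x := x)
          L.differentiableAt (hgdiff x hx) (hΩ.uniqueDiffOn x hx)
        have hfun : (fun y => iteratedFDerivWithin ℝ i (fun y => (f y)⁻¹) Ω y (Fin.tail vs))
            = (L : _ → ℝ) ∘ iteratedFDerivWithin ℝ i (fun y => (f y)⁻¹) Ω := rfl
        calc (e.d (vs 0)).eval f Ω x = fderivWithin ℝ (e.eval f Ω) Ω x (vs 0) := hderiv.symm
          _ = fderivWithin ℝ ((L : _ → ℝ) ∘ iteratedFDerivWithin ℝ i (fun y => (f y)⁻¹) Ω)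
              Ω x (vs 0) := by rw [hcongr, hfun]
          _ = L ((fderivWithin ℝ (iteratedFDerivWithin ℝ i (fun y => (f y)⁻¹) Ω) Ω x) (vs 0)) := by
              rw [hcomp, ContinuousLinearMap.fderiv]; rfl
          _ = iteratedFDerivWithin ℝ (i + 1) (fun y => (f y)⁻¹) Ω x vs := by
              rw [iteratedFDerivWithin_succ_apply_left]; rfl

lemma inv_bounds (hΩ : IsOpen Ω) (hf : ContDiffOn ℝ m f Ω) (hf0 : ∀ x ∈ Ω, f x ≠ 0)
    (hσ : 0 < σ) (hσ1 : σ ≤ 1) (hM : 0 ≤ M) (hA1 : 1 ≤ A) (hMA : M ≤ A)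
    (h1 : ∀ j, j ≤ m → ∀ x ∈ Ω, ‖iteratedFDerivWithin ℝ j f Ω x‖ ≤ M)
    (h2 : ∀ j, j ≤ m → ∀ x ∈ Ω, ∀ y ∈ Ω,
      ‖iteratedFDerivWithin ℝ j f Ω x - iteratedFDerivWithin ℝ j f Ω y‖ ≤ M * ‖x - y‖ ^ (σ / 2))
    (h3 : ∀ j, j ≤ m → ∀ x h : E, h ≠ 0 → x ∈ Ω → x + h ∈ Ω → x + 2 • h ∈ Ω →
      ‖iteratedFDerivWithin ℝ j f Ω (x + 2 • h) - 2 • iteratedFDerivWithin ℝ j f Ω (x + h)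
        + iteratedFDerivWithin ℝ j f Ω x‖ ≤ M * ‖h‖ ^ σ)
    (hGg : GoodB σ Ω A (fun x => (f x)⁻¹))
    {i : ℕ} (him : i ≤ m) :
    (∀ x ∈ Ω, ‖iteratedFDerivWithin ℝ i (fun y => (f y)⁻¹) Ω x‖ ≤ zygK A i) ∧
    (∀ x ∈ Ω, ∀ y ∈ Ω, ‖iteratedFDerivWithin ℝ i (fun y => (f y)⁻¹) Ω x
        - iteratedFDerivWithin ℝ i (fun y => (f y)⁻¹) Ω y‖ ≤ zygK A i * ‖x - y‖ ^ (σ / 2)) ∧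
    (∀ x h : E, h ≠ 0 → x ∈ Ω → x + h ∈ Ω → x + 2 • h ∈ Ω →
      ‖iteratedFDerivWithin ℝ i (fun y => (f y)⁻¹) Ω (x + 2 • h)
        - 2 • iteratedFDerivWithin ℝ i (fun y => (f y)⁻¹) Ω (x + h)
        + iteratedFDerivWithin ℝ i (fun y => (f y)⁻¹) Ω x‖ ≤ zygK A i * ‖h‖ ^ σ) := by
  have hK1 : 1 ≤ zygK A i := zygK_ge_one hA1 i
  have hK0 : (0:ℝ) ≤ zygK A i := by linarith
  have rep := inv_rep hΩ hf hf0 hA1 i him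
  have good : ∀ e : ZExpr E, e.wf m → GoodB σ Ω (e.W A) (e.eval f Ω) :=
    ZExpr.good hσ hσ1 hM hA1 hMA h1 h2 h3 hGg
  refine ⟨fun x hx => ?_, fun x hx y hy => ?_, fun x h hne hx hx1 hx2 => ?_⟩
  · refine opNorm_le_of_unit _ hK0 fun vs hvs => ?_
    obtain ⟨e, hwf, _, hW, heval⟩ := rep vs hvs
    rw [← heval x hx]
    exact ((good e hwf).1 x hx).trans hW
  · have hd0 : (0:ℝ) ≤ ‖x - y‖ ^ (σ / 2) := Real.rpow_nonneg (norm_nonneg _) _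
    refine opNorm_le_of_unit _ (by positivity) fun vs hvs => ?_
    obtain ⟨e, hwf, _, hW, heval⟩ := rep vs hvs
    have key : (iteratedFDerivWithin ℝ i (fun y => (f y)⁻¹) Ω x
        - iteratedFDerivWithin ℝ i (fun y => (f y)⁻¹) Ω y) vs
        = e.eval f Ω x - e.eval f Ω y := by
      simp [heval x hx, heval y hy]
    rw [key]
    refine ((good e hwf).2.1 x hx y hy).trans ?_
    exact mul_le_mul_of_nonneg_right hW hd0
  · have hd0 : (0:ℝ) ≤ ‖h‖ ^ σ := Real.rpow_nonneg (norm_nonneg _) _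
    refine opNorm_le_of_unit _ (by positivity) fun vs hvs => ?_
    obtain ⟨e, hwf, _, hW, heval⟩ := rep vs hvs
    have key : (iteratedFDerivWithin ℝ i (fun y => (f y)⁻¹) Ω (x + 2 • h)
        - 2 • iteratedFDerivWithin ℝ i (fun y => (f y)⁻¹) Ω (x + h)
        + iteratedFDerivWithin ℝ i (fun y => (f y)⁻¹) Ω x) vs
        = e.eval f Ω (x + 2 • h) - 2 * e.eval f Ω (x + h) + e.eval f Ω x := by
      rw [two_smul ℕ (iteratedFDerivWithin ℝ i (fun y => (f y)⁻¹) Ω (x + h))]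
      simp only [ContinuousMultilinearMap.add_apply, ContinuousMultilinearMap.sub_apply]
      rw [← heval _ hx, ← heval _ hx1, ← heval _ hx2]
      ring
    rw [key]
    refine ((good e hwf).2.2 x h hne hx hx1 hx2).trans ?_
    exact mul_le_mul_of_nonneg_right hW hd0

end Zaux

/-- For `m ∈ ℕ`, `s ∈ (m, m+1]`, and `f ∈ 𝒞^s(Ω)` with `inf_Ω |f| ≥ c₀ > 0`,
we have `1/f ∈ 𝒞^s(Ω)` with `‖1/f‖_{𝒞^s(Ω)} ≤ C`, where `C` depends only on `m`, `n`, `c₀`,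
and an upper bound `M` for `‖f‖_{𝒞^s(Ω)}`. -/
theorem zygmund_inverse (n m : ℕ) (c₀ M : ℝ) (hc₀ : 0 < c₀) :
    ∃ C : ℝ≥0∞, C < ⊤ ∧
      ∀ s : ℝ, (m : ℝ) < s → s ≤ m + 1 →
        ∀ Ω : Set (EuclideanSpace ℝ (Fin n)),
          IsOpen Ω → Bornology.IsBounded Ω → IsConnected Ω →
            ∀ f : EuclideanSpace ℝ (Fin n) → ℝ,
              MemZyg s Ω f → zygNorm s Ω f ≤ ENNReal.ofReal M →
              (∀ x ∈ Ω, c₀ ≤ |f x|) →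
                MemZyg s Ω (fun x => (f x)⁻¹) ∧
                  zygNorm s Ω (fun x => (f x)⁻¹) ≤ C := by
  classical
  set M' : ℝ := max M 1 with hM'def
  have hM'1 : 1 ≤ M' := le_max_right _ _
  have hM'0 : (0:ℝ) ≤ M' := by linarith
  have hMM' : M ≤ M' := le_max_left _ _
  set A : ℝ := 1 + M' + (1 / c₀ + M' / c₀ ^ 2 + 3 * M' ^ 2 / c₀ ^ 3) with hAdef
  have hBnn : (0:ℝ) ≤ 1 / c₀ + M' / c₀ ^ 2 + 3 * M' ^ 2 / c₀ ^ 3 := by positivity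
  have hA1 : 1 ≤ A := by rw [hAdef]; linarith
  have hMA : M' ≤ A := by rw [hAdef]; linarith
  refine ⟨ENNReal.ofReal ((m + 1 : ℝ) * (3 * zygK A m)), ENNReal.ofReal_lt_top, ?_⟩
  intro s hms hsm1 Ω hΩopen hΩbdd hΩconn f hmem hnorm hcbound
  set σ : ℝ := s - m with hσdef
  have hσpos : 0 < σ := by rw [hσdef]; linarith
  have hσ1 : σ ≤ 1 := by rw [hσdef]; linarith
  have hceil : ⌈s⌉₊ = m + 1 := by
    rw [Nat.ceil_eq_iff (Nat.succ_ne_zero m)]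
    constructor
    · have he : m + 1 - 1 = m := by omega
      rw [he]
      exact_mod_cast hms
    · push_cast; linarith
  have hmeq : (⌈s⌉₊ - 1 : ℕ) = m := by rw [hceil]; omega
  have hf0 : ∀ x ∈ Ω, f x ≠ 0 := by
    intro x hx h0
    have := hcbound x hx
    rw [h0] at this; simp at this; linarith
  have hfC : ContDiffOn ℝ m f Ω := by
    have h := hmem.1; rwa [hmeq] at h
  -- expansion of the Zygmund norm
  have hexp : ∀ u : EuclideanSpace ℝ (Fin n) → ℝ, zygNorm s Ω u
      = ∑ i ∈ Finset.range (m + 1), zygBase σ Ω (iteratedFDerivWithin ℝ i u Ω) := by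
    intro u
    simp only [zygNorm]
    rw [hceil, show m + 1 - 1 = m from by omega, ← hσdef]
  -- extraction of the bounds on f
  have hterm : ∀ j, j ≤ m → zygBase σ Ω (iteratedFDerivWithin ℝ j f Ω)
      ≤ ENNReal.ofReal M' := by
    intro j hj
    have h0 := hnorm
    rw [hexp f] at h0
    refine le_trans (le_trans ?_ h0) (ENNReal.ofReal_le_ofReal hMM')
    exact Finset.single_le_sum (f := fun i => zygBase σ Ω (iteratedFDerivWithin ℝ i f Ω))
      (fun i _ => zero_le) (Finset.mem_range.mpr (by omega))
  have hhol : ∀ j, j ≤ m → holderNorm (σ / 2) Ω (iteratedFDerivWithin ℝ j f Ω)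
      ≤ ENNReal.ofReal M' := fun j hj => le_trans le_self_add (hterm j hj)
  have hsd : ∀ j, j ≤ m → secondDiff σ Ω (iteratedFDerivWithin ℝ j f Ω)
      ≤ ENNReal.ofReal M' := fun j hj => le_trans le_add_self (hterm j hj)
  have h1 : ∀ j, j ≤ m → ∀ x ∈ Ω, ‖iteratedFDerivWithin ℝ j f Ω x‖ ≤ M' := by
    intro j hj x hx
    have hS : (⨆ x ∈ Ω, ENNReal.ofReal ‖iteratedFDerivWithin ℝ j f Ω x‖)
        ≤ ENNReal.ofReal M' := le_trans le_self_add (by simpa [holderNorm] using hhol j hj)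
    have := le_trans (le_iSup₂ (f := fun x (_ : x ∈ Ω) =>
      ENNReal.ofReal ‖iteratedFDerivWithin ℝ j f Ω x‖) x hx) hS
    exact (ENNReal.ofReal_le_ofReal_iff hM'0).mp this
  have h2 : ∀ j, j ≤ m → ∀ x ∈ Ω, ∀ y ∈ Ω,
      ‖iteratedFDerivWithin ℝ j f Ω x - iteratedFDerivWithin ℝ j f Ω y‖
        ≤ M' * ‖x - y‖ ^ (σ / 2) := by
    intro j hj x hx y hy
    by_cases hxy : x = y
    · subst hxy
      simp
      positivity
    · have hd : (0:ℝ) < ‖x - y‖ ^ (σ / 2) :=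
        Real.rpow_pos_of_pos (norm_pos_iff.mpr (sub_ne_zero.mpr hxy)) _
      have hS : (⨆ (x ∈ Ω) (y ∈ Ω) (_ : x ≠ y), ENNReal.ofReal
          (‖iteratedFDerivWithin ℝ j f Ω x - iteratedFDerivWithin ℝ j f Ω y‖ / ‖x - y‖ ^ (σ / 2)))
          ≤ ENNReal.ofReal M' := le_trans le_add_self (by simpa [holderNorm] using hhol j hj)
      have hle : ENNReal.ofReal
          (‖iteratedFDerivWithin ℝ j f Ω x - iteratedFDerivWithin ℝ j f Ω y‖ / ‖x - y‖ ^ (σ / 2))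
          ≤ ENNReal.ofReal M' := by
        refine le_trans ?_ hS
        refine le_iSup_of_le x ?_
        refine le_iSup_of_le hx ?_
        refine le_iSup_of_le y ?_
        refine le_iSup_of_le hy ?_
        exact le_iSup_of_le hxy le_rfl
      have := (ENNReal.ofReal_le_ofReal_iff hM'0).mp hle
      exact (div_le_iff₀ hd).mp this
  have h3 : ∀ j, j ≤ m → ∀ x h : EuclideanSpace ℝ (Fin n), h ≠ 0 → x ∈ Ω → x + h ∈ Ω →
      x + 2 • h ∈ Ω →
      ‖iteratedFDerivWithin ℝ j f Ω (x + 2 • h) - 2 • iteratedFDerivWithin ℝ j f Ω (x + h)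
        + iteratedFDerivWithin ℝ j f Ω x‖ ≤ M' * ‖h‖ ^ σ := by
    intro j hj x h hne hx hx1 hx2
    have hd : (0:ℝ) < ‖h‖ ^ σ := Real.rpow_pos_of_pos (norm_pos_iff.mpr hne) _
    have hS := hsd j hj
    simp only [secondDiff] at hS
    have hle : ENNReal.ofReal
        (‖iteratedFDerivWithin ℝ j f Ω (x + 2 • h) - 2 • iteratedFDerivWithin ℝ j f Ω (x + h)
          + iteratedFDerivWithin ℝ j f Ω x‖ / ‖h‖ ^ σ) ≤ ENNReal.ofReal M' := by
      refine le_trans ?_ hS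
      refine le_iSup_of_le x ?_
      refine le_iSup_of_le h ?_
      refine le_iSup_of_le hne ?_
      refine le_iSup_of_le hx ?_
      refine le_iSup_of_le hx1 ?_
      exact le_iSup_of_le hx2 le_rfl
    have := (ENNReal.ofReal_le_ofReal_iff hM'0).mp hle
    exact (div_le_iff₀ hd).mp this
  -- scalar bounds on f itself
  have hf1s : ∀ x ∈ Ω, |f x| ≤ M' := by
    intro x hx
    have := h1 0 (Nat.zero_le _) x hx
    rwa [norm_iteratedFDerivWithin_zero, Real.norm_eq_abs] at this
  have hf2s : ∀ x ∈ Ω, ∀ y ∈ Ω, |f x - f y| ≤ M' * ‖x - y‖ ^ (σ / 2) := by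
    intro x hx y hy
    have key : f x - f y = (iteratedFDerivWithin ℝ 0 f Ω x - iteratedFDerivWithin ℝ 0 f Ω y)
        (fun k : Fin 0 => k.elim0) := by
      simp [ContinuousMultilinearMap.sub_apply, iteratedFDerivWithin_zero_apply]
    rw [key]
    exact (cmm_apply_abs_le _ (fun k => k.elim0)).trans (h2 0 (Nat.zero_le _) x hx y hy)
  have hf3s : ∀ x h : EuclideanSpace ℝ (Fin n), h ≠ 0 → x ∈ Ω → x + h ∈ Ω → x + 2 • h ∈ Ω →
      |f (x + 2 • h) - 2 * f (x + h) + f x| ≤ M' * ‖h‖ ^ σ := by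
    intro x h hne hx hx1 hx2
    have key : f (x + 2 • h) - 2 * f (x + h) + f x
        = (iteratedFDerivWithin ℝ 0 f Ω (x + 2 • h) - 2 • iteratedFDerivWithin ℝ 0 f Ω (x + h)
          + iteratedFDerivWithin ℝ 0 f Ω x) (fun k : Fin 0 => k.elim0) := by
      rw [two_smul ℕ (iteratedFDerivWithin ℝ 0 f Ω (x + h))]
      simp only [ContinuousMultilinearMap.add_apply, ContinuousMultilinearMap.sub_apply,
        iteratedFDerivWithin_zero_apply]
      ring
    rw [key]
    exact (cmm_apply_abs_le _ (fun k => k.elim0)).trans (h3 0 (Nat.zero_le _) x h hne hx hx1 hx2)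
  -- GoodB for the inverse
  have hGg : GoodB σ Ω A (fun x => (f x)⁻¹) := by
    refine GoodB.mono ?_ (goodB_inv hσpos hσ1 hc₀ hM'0 hf1s hf2s hf3s hcbound)
    rw [hAdef]; linarith
  -- the uniform bounds on the derivatives of the inverse
  have hbounds := fun (i : ℕ) (hi : i ≤ m) =>
    inv_bounds hΩopen hfC hf0 hσpos hσ1 hM'0 hA1 hMA
      h1 h2 h3 hGg hi
  -- final bound on the Zygmund norm of the inverse
  have hmain : zygNorm s Ω (fun x => (f x)⁻¹)
      ≤ ENNReal.ofReal ((m + 1 : ℝ) * (3 * zygK A m)) := by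
    rw [hexp]
    have hKm1 : (1:ℝ) ≤ zygK A m := zygK_ge_one hA1 m
    have hKm0 : (0:ℝ) ≤ zygK A m := by linarith
    have hstep : ∀ i ∈ Finset.range (m + 1),
        zygBase σ Ω (iteratedFDerivWithin ℝ i (fun x => (f x)⁻¹) Ω)
          ≤ ENNReal.ofReal (3 * zygK A m) := by
      intro i hi
      have him : i ≤ m := by simpa [Nat.lt_succ_iff] using Finset.mem_range.mp hi
      obtain ⟨b1, b2, b3⟩ := hbounds i him
      have hKm : zygK A i ≤ zygK A m := zygK_mono hA1 him
      have p1 : (⨆ x ∈ Ω, ENNReal.ofReal ‖iteratedFDerivWithin ℝ i (fun x => (f x)⁻¹) Ω x‖)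
          ≤ ENNReal.ofReal (zygK A m) := by
        refine iSup₂_le fun x hx => ?_
        exact ENNReal.ofReal_le_ofReal ((b1 x hx).trans hKm)
      have p2 : (⨆ (x ∈ Ω) (y ∈ Ω) (_ : x ≠ y), ENNReal.ofReal
          (‖iteratedFDerivWithin ℝ i (fun x => (f x)⁻¹) Ω x
            - iteratedFDerivWithin ℝ i (fun x => (f x)⁻¹) Ω y‖ / ‖x - y‖ ^ (σ / 2)))
          ≤ ENNReal.ofReal (zygK A m) := by
        refine iSup₂_le fun x hx => iSup₂_le fun y hy => iSup_le fun hxy => ?_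
        refine ENNReal.ofReal_le_ofReal ?_
        have hd : (0:ℝ) < ‖x - y‖ ^ (σ / 2) :=
          Real.rpow_pos_of_pos (norm_pos_iff.mpr (sub_ne_zero.mpr hxy)) _
        rw [div_le_iff₀ hd]
        exact (b2 x hx y hy).trans
          (mul_le_mul_of_nonneg_right hKm (le_of_lt hd))
      have p3 : secondDiff σ Ω (iteratedFDerivWithin ℝ i (fun x => (f x)⁻¹) Ω)
          ≤ ENNReal.ofReal (zygK A m) := by
        simp only [secondDiff]
        refine iSup_le fun x => iSup_le fun h => iSup_le fun hne => iSup_le fun hx =>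
          iSup_le fun hx1 => iSup_le fun hx2 => ?_
        refine ENNReal.ofReal_le_ofReal ?_
        have hd : (0:ℝ) < ‖h‖ ^ σ := Real.rpow_pos_of_pos (norm_pos_iff.mpr hne) _
        rw [div_le_iff₀ hd]
        exact (b3 x h hne hx hx1 hx2).trans (mul_le_mul_of_nonneg_right hKm (le_of_lt hd))
      calc zygBase σ Ω (iteratedFDerivWithin ℝ i (fun x => (f x)⁻¹) Ω)
          = holderNorm (σ / 2) Ω (iteratedFDerivWithin ℝ i (fun x => (f x)⁻¹) Ω)
            + secondDiff σ Ω (iteratedFDerivWithin ℝ i (fun x => (f x)⁻¹) Ω) := rfl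
        _ ≤ (ENNReal.ofReal (zygK A m) + ENNReal.ofReal (zygK A m))
            + ENNReal.ofReal (zygK A m) := by
            refine add_le_add (add_le_add p1 p2) p3
        _ = ENNReal.ofReal (3 * zygK A m) := by
            rw [← ENNReal.ofReal_add hKm0 hKm0, ← ENNReal.ofReal_add (by linarith) hKm0]
            norm_num
            ring_nf
            rw [ENNReal.ofReal_mul hKm0, ENNReal.ofReal_ofNat]
    calc ∑ i ∈ Finset.range (m + 1), zygBase σ Ω (iteratedFDerivWithin ℝ i (fun x => (f x)⁻¹) Ω)
        ≤ ∑ _i ∈ Finset.range (m + 1), ENNReal.ofReal (3 * zygK A m) :=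
          Finset.sum_le_sum hstep
      _ = (m + 1) • ENNReal.ofReal (3 * zygK A m) := by
          rw [Finset.sum_const, Finset.card_range]
      _ ≤ ENNReal.ofReal ((m + 1 : ℝ) * (3 * zygK A m)) := by
          rw [nsmul_eq_mul, ← ENNReal.ofReal_natCast (m + 1),
            ← ENNReal.ofReal_mul (by positivity)]
          apply ENNReal.ofReal_le_ofReal
          apply le_of_eq
          push_cast
          ring
  refine ⟨⟨hmem.1.inv hf0, ?_⟩, hmain⟩
  exact ne_top_of_le_ne_top ENNReal.ofReal_ne_top hmain
end

section
/- Let m ∈ ℕ with m ≥ 1, s ∈ (0,1], η₁ > 0, and f ∈ 𝒞^{m+s}(B^n(η₁)) with f(0) = 0. For γ ∈ (0, min{η₁/5, 1}], define f_γ(t) := f(γt) on B^n(5). Then ‖f_γ‖_{𝒞^{m+s}(B^n(5))} ≤ 91 γ ‖f‖_{𝒞^{m+s}(B^n(η₁))}. -/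
open Set Metric ENNReal

variable {E : Type*} [NormedAddCommGroup E] [NormedSpace ℝ E]

lemma compCLM_smul {i : ℕ} (γ : ℝ) (A : ContinuousMultilinearMap ℝ (fun _ : Fin i => E) ℝ) :
    A.compContinuousLinearMap (fun _ => γ • ContinuousLinearMap.id ℝ E) = γ ^ i • A := by
  ext v
  simp only [ContinuousMultilinearMap.compContinuousLinearMap_apply,
    ContinuousLinearMap.smul_apply, ContinuousLinearMap.id_apply,
    ContinuousMultilinearMap.smul_apply]
  rw [A.map_smul_univ (fun _ => γ) v]
  simp

lemma scaled_deriv {η₁ γ : ℝ} (hγ0 : 0 < γ) (h5γ : γ * 5 ≤ η₁) (f : E → ℝ) (N : ℕ)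
    (hf : ContDiffOn ℝ (N : ℕ∞) f (ball 0 η₁)) {i : ℕ} (hi : i ≤ N) {x : E}
    (hx : x ∈ ball (0 : E) 5) :
    iteratedFDerivWithin ℝ i (fun t => f (γ • t)) (ball (0 : E) 5) x =
      γ ^ i • iteratedFDerivWithin ℝ i f (ball (0 : E) η₁) (γ • x) := by
  set g : E →L[ℝ] E := γ • ContinuousLinearMap.id ℝ E with hg
  have hgapp : ∀ t : E, g t = γ • t := fun t => rfl
  have hfun : (fun t => f (γ • t)) = f ∘ g := rfl
  have hO : IsOpen (g ⁻¹' ball (0 : E) η₁) := isOpen_ball.preimage g.continuous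
  have hxg : g x ∈ ball (0 : E) η₁ := by
    rw [hgapp, mem_ball_zero_iff, norm_smul, Real.norm_eq_abs, abs_of_pos hγ0]
    have := mem_ball_zero_iff.1 hx
    nlinarith
  have hx' : x ∈ g ⁻¹' ball (0 : E) η₁ := hxg
  rw [hfun, iteratedFDerivWithin_of_isOpen i isOpen_ball hx,
    ← iteratedFDerivWithin_of_isOpen i hO hx',
    g.iteratedFDerivWithin_comp_right hf isOpen_ball.uniqueDiffOn hO.uniqueDiffOn hxg
      (by exact_mod_cast hi), compCLM_smul]
  rfl

lemma real_quot {γ : ℝ} (hγ0 : 0 < γ) (hγ1 : γ ≤ 1) {i : ℕ} (hi : 1 ≤ i) {σ : ℝ}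
    (hσ0 : 0 ≤ σ) {a r : ℝ} (ha : 0 ≤ a) (hr : 0 < r) :
    γ ^ i * a / r ^ σ ≤ γ * (a / (γ * r) ^ σ) := by
  have hγσ : (0:ℝ) < γ ^ σ := Real.rpow_pos_of_pos hγ0 σ
  have hrσ : (0:ℝ) < r ^ σ := Real.rpow_pos_of_pos hr σ
  rw [Real.mul_rpow hγ0.le hr.le]
  have h1 : γ * (a / (γ ^ σ * r ^ σ)) = γ / γ ^ σ * (a / r ^ σ) := by
    field_simp
  have h2 : γ ^ i * a / r ^ σ = γ ^ i * (a / r ^ σ) := by ring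
  rw [h1, h2]
  apply mul_le_mul_of_nonneg_right _ (div_nonneg ha hrσ.le)
  rw [le_div_iff₀ hγσ]
  calc γ ^ i * γ ^ σ ≤ γ ^ 1 * 1 :=
        mul_le_mul (pow_le_pow_of_le_one hγ0.le hγ1 hi) (Real.rpow_le_one hγ0.le hγ1 hσ0)
          hγσ.le (by positivity)
    _ = γ := by ring

lemma real_quot0 {C γ r σ a : ℝ} (hγ : 0 ≤ γ) (hσ0 : 0 ≤ σ) (hσ1 : σ ≤ 1)
    (hr0 : 0 < r) (hr : r ≤ 10) (ha : a ≤ C * γ * r) (ha0 : 0 ≤ a) :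
    a / r ^ σ ≤ 10 * (C * γ) := by
  have hC : 0 ≤ C * γ := by
    rcases le_or_gt (C * γ) 0 with h | h
    · nlinarith
    · exact h.le
  have hrσ : (0:ℝ) < r ^ σ := Real.rpow_pos_of_pos hr0 σ
  have h1 : a / r ^ σ ≤ C * γ * r / r ^ σ := by gcongr
  have h2 : C * γ * r / r ^ σ = C * γ * r ^ (1 - σ) := by
    rw [Real.rpow_sub hr0, Real.rpow_one]; ring
  have h3 : r ^ (1 - σ) ≤ 10 ^ (1 - σ) := Real.rpow_le_rpow hr0.le hr (by linarith)
  have h4 : (10:ℝ) ^ (1 - σ) ≤ 10 := by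
    calc (10:ℝ) ^ (1 - σ) ≤ 10 ^ (1:ℝ) :=
          Real.rpow_le_rpow_of_exponent_le (by norm_num) (by linarith)
      _ = 10 := Real.rpow_one 10
  calc a / r ^ σ ≤ C * γ * r ^ (1 - σ) := by rw [← h2]; exact h1
    _ ≤ C * γ * 10 := by nlinarith
    _ = 10 * (C * γ) := by ring

section Aux
variable {E : Type*} [NormedAddCommGroup E] [NormedSpace ℝ E]

lemma smul_secondDiff {M : Type*} [AddCommGroup M] [Module ℝ M] (c : ℝ) (a b d : M) :
    c • a - 2 • (c • b) + c • d = c • (a - 2 • b + d) := by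
  rw [two_smul ℕ (c • b), two_smul ℕ b, ← smul_add c b b, ← smul_sub c a (b + b), ← smul_add]

lemma map_secondDiff {M N F' : Type*} [AddCommGroup M] [AddCommGroup N] [FunLike F' M N]
    [AddMonoidHomClass F' M N] (e : F') (a b d : M) :
    e a - 2 • e b + e d = e (a - 2 • b + d) := by
  simp [two_smul ℕ, map_sub, map_add]

lemma mem_scale {η₁ γ : ℝ} (hγ0 : 0 < γ) (h5γ : γ * 5 ≤ η₁) {x : E}
    (hx : x ∈ ball (0 : E) 5) : γ • x ∈ ball (0 : E) η₁ := by
  rw [mem_ball_zero_iff, norm_smul, Real.norm_eq_abs, abs_of_pos hγ0]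
  have := mem_ball_zero_iff.1 hx
  nlinarith

lemma norm_pow_smul {i : ℕ} {γ : ℝ} (hγ0 : 0 < γ)
    (A : ContinuousMultilinearMap ℝ (fun _ : Fin i => E) ℝ) :
    ‖γ ^ i • A‖ = γ ^ i * ‖A‖ := by
  rw [norm_smul (γ ^ i) A, Real.norm_eq_abs, abs_of_pos (pow_pos hγ0 i)]

lemma zygBase_term_le {η₁ γ s : ℝ} (hγ0 : 0 < γ) (hγ1 : γ ≤ 1) (h5γ : γ * 5 ≤ η₁)
    (hs0 : 0 < s) (f : E → ℝ) (N : ℕ)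
    (hf : ContDiffOn ℝ (N : ℕ∞) f (ball 0 η₁)) {i : ℕ} (hi1 : 1 ≤ i) (hiN : i ≤ N) :
    zygBase s (ball (0 : E) 5) (iteratedFDerivWithin ℝ i (fun t => f (γ • t)) (ball (0 : E) 5)) ≤
      ENNReal.ofReal γ *
        zygBase s (ball (0 : E) η₁) (iteratedFDerivWithin ℝ i f (ball (0 : E) η₁)) := by
  set Ω₁ := ball (0 : E) η₁
  set Ω₅ := ball (0 : E) 5
  set g := iteratedFDerivWithin ℝ i f Ω₁ with hgdef
  set G := iteratedFDerivWithin ℝ i (fun t => f (γ • t)) Ω₅ with hGdef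
  have hsc : ∀ x ∈ Ω₅, G x = γ ^ i • g (γ • x) := fun x hx =>
    scaled_deriv hγ0 h5γ f N hf hiN hx
  have hA : (⨆ x ∈ Ω₅, ENNReal.ofReal ‖G x‖) ≤
      ENNReal.ofReal γ * ⨆ x ∈ Ω₁, ENNReal.ofReal ‖g x‖ := by
    refine iSup₂_le fun x hx => ?_
    rw [hsc x hx, norm_pow_smul hγ0]
    calc ENNReal.ofReal (γ ^ i * ‖g (γ • x)‖)
        ≤ ENNReal.ofReal (γ * ‖g (γ • x)‖) := by
          apply ENNReal.ofReal_le_ofReal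
          have : γ ^ i ≤ γ := by
            calc γ ^ i ≤ γ ^ 1 := pow_le_pow_of_le_one hγ0.le hγ1 hi1
              _ = γ := pow_one γ
          exact mul_le_mul_of_nonneg_right this (norm_nonneg _)
      _ = ENNReal.ofReal γ * ENNReal.ofReal ‖g (γ • x)‖ :=
          ENNReal.ofReal_mul hγ0.le
      _ ≤ ENNReal.ofReal γ * ⨆ x ∈ Ω₁, ENNReal.ofReal ‖g x‖ := by
          apply mul_le_mul_right
          exact le_iSup₂ (f := fun x (_ : x ∈ Ω₁) => ENNReal.ofReal ‖g x‖) (γ • x)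
            (mem_scale hγ0 h5γ hx)
  have hB : (⨆ (x ∈ Ω₅) (y ∈ Ω₅) (_ : x ≠ y),
        ENNReal.ofReal (‖G x - G y‖ / ‖x - y‖ ^ (s / 2))) ≤
      ENNReal.ofReal γ * ⨆ (x ∈ Ω₁) (y ∈ Ω₁) (_ : x ≠ y),
        ENNReal.ofReal (‖g x - g y‖ / ‖x - y‖ ^ (s / 2)) := by
    simp only [iSup_le_iff]
    intro x hx y hy hxy
    have hdiff : G x - G y = γ ^ i • (g (γ • x) - g (γ • y)) := by
      rw [hsc x hx, hsc y hy]; exact (smul_sub (γ ^ i) _ _).symm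
    have hsub : γ • x - γ • y = γ • (x - y) := (smul_sub γ x y).symm
    have hr : (0:ℝ) < ‖x - y‖ := norm_sub_pos_iff.2 hxy
    have key : ‖G x - G y‖ / ‖x - y‖ ^ (s / 2) ≤
        γ * (‖g (γ • x) - g (γ • y)‖ / ‖γ • x - γ • y‖ ^ (s / 2)) := by
      rw [hdiff, norm_pow_smul hγ0, hsub, norm_smul, Real.norm_eq_abs, abs_of_pos hγ0]
      exact real_quot hγ0 hγ1 hi1 (by linarith) (norm_nonneg _) hr
    calc ENNReal.ofReal (‖G x - G y‖ / ‖x - y‖ ^ (s / 2))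
        ≤ ENNReal.ofReal (γ * (‖g (γ • x) - g (γ • y)‖ / ‖γ • x - γ • y‖ ^ (s / 2))) :=
          ENNReal.ofReal_le_ofReal key
      _ = ENNReal.ofReal γ *
            ENNReal.ofReal (‖g (γ • x) - g (γ • y)‖ / ‖γ • x - γ • y‖ ^ (s / 2)) :=
          ENNReal.ofReal_mul hγ0.le
      _ ≤ _ := by
          apply mul_le_mul_right
          refine le_iSup_of_le (γ • x) ?_
          refine le_iSup_of_le (mem_scale hγ0 h5γ hx) ?_
          refine le_iSup_of_le (γ • y) ?_
          refine le_iSup_of_le (mem_scale hγ0 h5γ hy) ?_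
          exact le_iSup_of_le (fun h => hxy (smul_right_injective E hγ0.ne' h)) le_rfl
  have hD : secondDiff s Ω₅ G ≤ ENNReal.ofReal γ * secondDiff s Ω₁ g := by
    rw [secondDiff, secondDiff]
    simp only [iSup_le_iff]
    intro x h hh hx hxh hx2h
    have e1 : γ • (x + h) = γ • x + γ • h := smul_add γ x h
    have e2 : γ • (x + 2 • h) = γ • x + 2 • γ • h := by
      rw [smul_add, smul_comm]
    have hdiff : G (x + 2 • h) - 2 • G (x + h) + G x =
        γ ^ i • (g (γ • x + 2 • γ • h) - 2 • g (γ • x + γ • h) + g (γ • x)) := by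
      rw [hsc _ hx2h, hsc _ hxh, hsc _ hx, ← e1, ← e2, smul_secondDiff]
    have hh' : γ • h ≠ 0 := smul_ne_zero hγ0.ne' hh
    have hrh : (0:ℝ) < ‖h‖ := norm_pos_iff.2 hh
    have key : ‖G (x + 2 • h) - 2 • G (x + h) + G x‖ / ‖h‖ ^ s ≤
        γ * (‖g (γ • x + 2 • γ • h) - 2 • g (γ • x + γ • h) + g (γ • x)‖ / ‖γ • h‖ ^ s) := by
      rw [hdiff, norm_pow_smul hγ0, norm_smul, Real.norm_eq_abs, abs_of_pos hγ0]
      exact real_quot hγ0 hγ1 hi1 hs0.le (norm_nonneg _) hrh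
    calc ENNReal.ofReal (‖G (x + 2 • h) - 2 • G (x + h) + G x‖ / ‖h‖ ^ s)
        ≤ ENNReal.ofReal (γ * (‖g (γ • x + 2 • γ • h) - 2 • g (γ • x + γ • h) + g (γ • x)‖ /
            ‖γ • h‖ ^ s)) := ENNReal.ofReal_le_ofReal key
      _ = ENNReal.ofReal γ * ENNReal.ofReal
            (‖g (γ • x + 2 • γ • h) - 2 • g (γ • x + γ • h) + g (γ • x)‖ / ‖γ • h‖ ^ s) :=
          ENNReal.ofReal_mul hγ0.le
      _ ≤ _ := by
          apply mul_le_mul_right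
          refine le_iSup_of_le (γ • x) ?_
          refine le_iSup_of_le (γ • h) ?_
          refine le_iSup_of_le hh' ?_
          refine le_iSup_of_le (mem_scale hγ0 h5γ hx) ?_
          refine le_iSup_of_le (by rw [← e1]; exact mem_scale hγ0 h5γ hxh) ?_
          refine le_iSup_of_le (by rw [← e2]; exact mem_scale hγ0 h5γ hx2h) le_rfl
  calc zygBase s Ω₅ G ≤ (ENNReal.ofReal γ * (⨆ x ∈ Ω₁, ENNReal.ofReal ‖g x‖) +
        ENNReal.ofReal γ * ⨆ (x ∈ Ω₁) (y ∈ Ω₁) (_ : x ≠ y),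
          ENNReal.ofReal (‖g x - g y‖ / ‖x - y‖ ^ (s / 2))) +
        ENNReal.ofReal γ * secondDiff s Ω₁ g :=
      add_le_add (add_le_add hA hB) hD
    _ = ENNReal.ofReal γ * zygBase s Ω₁ g := by
      rw [zygBase, holderNorm, mul_add, mul_add]

lemma sub_two_smul_add (a b c : ℝ) : a - 2 • b + c = (a - b) + (c - b) := by
  rw [two_smul ℕ b]; ring

lemma zygBase_zero_le {η₁ γ s C : ℝ} (hη₁ : 0 < η₁) (hγ0 : 0 < γ) (h5γ : γ * 5 ≤ η₁)
    (hs0 : 0 < s) (hs1 : s ≤ 1) (f : E → ℝ) (hf0 : f 0 = 0) (hC0 : 0 ≤ C)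
    (hlip : ∀ u ∈ ball (0 : E) η₁, ∀ w ∈ ball (0 : E) η₁, ‖f w - f u‖ ≤ C * ‖w - u‖) :
    zygBase s (ball (0 : E) 5) (iteratedFDerivWithin ℝ 0 (fun t => f (γ • t)) (ball (0 : E) 5)) ≤
      ENNReal.ofReal (40 * (C * γ)) := by
  set Ω₅ := ball (0 : E) 5
  set e := continuousMultilinearCurryFin0 ℝ E ℝ with he
  set G := iteratedFDerivWithin ℝ 0 (fun t => f (γ • t)) Ω₅ with hGdef
  have hG : ∀ x : E, G x = e.symm (f (γ • x)) := fun x => rfl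
  have hCγ : 0 ≤ C * γ := mul_nonneg hC0 hγ0.le
  have hball : ∀ x ∈ Ω₅, γ • x ∈ ball (0 : E) η₁ := fun x hx => mem_scale hγ0 h5γ hx
  have hfd : ∀ x ∈ Ω₅, ∀ y ∈ Ω₅, ‖f (γ • x) - f (γ • y)‖ ≤ C * γ * ‖x - y‖ := by
    intro x hx y hy
    have := hlip (γ • y) (hball y hy) (γ • x) (hball x hx)
    calc ‖f (γ • x) - f (γ • y)‖ ≤ C * ‖γ • x - γ • y‖ := this
      _ = C * γ * ‖x - y‖ := by
          rw [← smul_sub γ x y, norm_smul, Real.norm_eq_abs, abs_of_pos hγ0]; ring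
  have hA : (⨆ x ∈ Ω₅, ENNReal.ofReal ‖G x‖) ≤ ENNReal.ofReal (10 * (C * γ)) := by
    refine iSup₂_le fun x hx => ?_
    apply ENNReal.ofReal_le_ofReal
    have h1 : ‖G x‖ = ‖f (γ • x)‖ := by rw [hG x, LinearIsometryEquiv.norm_map]
    have h2 : ‖f (γ • x) - f 0‖ ≤ C * ‖(γ • x) - 0‖ :=
      hlip 0 (mem_ball_self hη₁) (γ • x) (hball x hx)
    have hγn : ‖γ‖ = γ := by rw [Real.norm_eq_abs, abs_of_pos hγ0]
    rw [hf0, sub_zero, sub_zero, norm_smul, hγn] at h2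
    have h3 : ‖x‖ < 5 := mem_ball_zero_iff.1 hx
    rw [h1]
    nlinarith [norm_nonneg x, norm_nonneg (f (γ • x))]
  have hB : (⨆ (x ∈ Ω₅) (y ∈ Ω₅) (_ : x ≠ y),
        ENNReal.ofReal (‖G x - G y‖ / ‖x - y‖ ^ (s / 2))) ≤
      ENNReal.ofReal (10 * (C * γ)) := by
    simp only [iSup_le_iff]
    intro x hx y hy hxy
    apply ENNReal.ofReal_le_ofReal
    have h1 : ‖G x - G y‖ = ‖f (γ • x) - f (γ • y)‖ := by
      rw [hG x, hG y, ← map_sub, LinearIsometryEquiv.norm_map]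
    have hr0 : (0:ℝ) < ‖x - y‖ := norm_sub_pos_iff.2 hxy
    have hr : ‖x - y‖ ≤ 10 := by
      have h3 : ‖x‖ < 5 := mem_ball_zero_iff.1 hx
      have h4 : ‖y‖ < 5 := mem_ball_zero_iff.1 hy
      calc ‖x - y‖ ≤ ‖x‖ + ‖y‖ := norm_sub_le x y
        _ ≤ 10 := by linarith
    rw [h1]
    exact real_quot0 hγ0.le (by linarith) (by linarith) hr0 hr (hfd x hx y hy) (norm_nonneg _)
  have hD : secondDiff s Ω₅ G ≤ ENNReal.ofReal (20 * (C * γ)) := by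
    rw [secondDiff]
    simp only [iSup_le_iff]
    intro x h hh hx hxh hx2h
    apply ENNReal.ofReal_le_ofReal
    have h1 : G (x + 2 • h) - 2 • G (x + h) + G x =
        e.symm (f (γ • (x + 2 • h)) - 2 • f (γ • (x + h)) + f (γ • x)) := by
      rw [hG, hG, hG]; exact map_secondDiff e.symm _ _ _
    have hrh : (0:ℝ) < ‖h‖ := norm_pos_iff.2 hh
    have hr : ‖h‖ ≤ 10 := by
      have h3 : ‖x‖ < 5 := mem_ball_zero_iff.1 hx
      have h4 : ‖x + h‖ < 5 := mem_ball_zero_iff.1 hxh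
      calc ‖h‖ = ‖(x + h) - x‖ := by rw [add_sub_cancel_left]
        _ ≤ ‖x + h‖ + ‖x‖ := norm_sub_le _ _
        _ ≤ 10 := by linarith
    have e21 : (x + 2 • h) - (x + h) = h := by rw [two_smul ℕ h]; abel
    have e22 : x - (x + h) = -h := by abel
    have hbound : ‖f (γ • (x + 2 • h)) - 2 • f (γ • (x + h)) + f (γ • x)‖ ≤
        2 * C * γ * ‖h‖ := by
      rw [sub_two_smul_add]
      calc ‖(f (γ • (x + 2 • h)) - f (γ • (x + h))) + (f (γ • x) - f (γ • (x + h)))‖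
          ≤ ‖f (γ • (x + 2 • h)) - f (γ • (x + h))‖ + ‖f (γ • x) - f (γ • (x + h))‖ :=
            norm_add_le _ _
        _ ≤ C * γ * ‖(x + 2 • h) - (x + h)‖ + C * γ * ‖x - (x + h)‖ :=
            add_le_add (hfd _ hx2h _ hxh) (hfd _ hx _ hxh)
        _ = 2 * C * γ * ‖h‖ := by rw [e21, e22, norm_neg]; ring
    have h2 : ‖G (x + 2 • h) - 2 • G (x + h) + G x‖ / ‖h‖ ^ s ≤ 10 * (2 * C * γ) := by
      rw [h1, LinearIsometryEquiv.norm_map]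
      exact real_quot0 hγ0.le hs0.le hs1 hrh hr hbound (norm_nonneg _)
    calc ‖G (x + 2 • h) - 2 • G (x + h) + G x‖ / ‖h‖ ^ s ≤ 10 * (2 * C * γ) := h2
      _ = 20 * (C * γ) := by ring
  calc zygBase s Ω₅ G ≤ (ENNReal.ofReal (10 * (C * γ)) + ENNReal.ofReal (10 * (C * γ))) +
        ENNReal.ofReal (20 * (C * γ)) := add_le_add (add_le_add hA hB) hD
    _ = ENNReal.ofReal (40 * (C * γ)) := by
        rw [← ENNReal.ofReal_add (by positivity) (by positivity),
          ← ENNReal.ofReal_add (by positivity) (by positivity)]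
        congr 1; ring

end Aux
/-- Scaling. For `m ≥ 1`, `s ∈ (0,1]`, `f ∈ 𝒞^{m+s}(B^n(η₁))` with `f 0 = 0`,
and `γ ∈ (0, min{η₁/5, 1}]`, the rescaled function `f_γ(t) = f(γ t)` satisfies
`‖f_γ‖_{𝒞^{m+s}(B^n(5))} ≤ 91 γ ‖f‖_{𝒞^{m+s}(B^n(η₁))}`. -/
theorem zygmund_scaling (n m : ℕ) (hm : 1 ≤ m) (s η₁ γ : ℝ)
    (hs0 : 0 < s) (hs1 : s ≤ 1) (hη₁ : 0 < η₁)
    (hγ0 : 0 < γ) (hγ : γ ≤ min (η₁ / 5) 1)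
    (f : EuclideanSpace ℝ (Fin n) → ℝ)
    (hf : MemZyg (m + s) (ball (0 : EuclideanSpace ℝ (Fin n)) η₁) f)
    (hf0 : f 0 = 0) :
    zygNorm (m + s) (ball (0 : EuclideanSpace ℝ (Fin n)) 5) (fun t => f (γ • t)) ≤
      ENNReal.ofReal (91 * γ) *
        zygNorm (m + s) (ball (0 : EuclideanSpace ℝ (Fin n)) η₁) f := by
  set Ω₁ := ball (0 : EuclideanSpace ℝ (Fin n)) η₁ with hΩ₁
  set Ω₅ := ball (0 : EuclideanSpace ℝ (Fin n)) 5 with hΩ₅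
  have hγ1 : γ ≤ 1 := hγ.trans (min_le_right _ _)
  have h5γ : γ * 5 ≤ η₁ := by
    have := hγ.trans (min_le_left _ _); linarith
  have hceil : ⌈(m : ℝ) + s⌉₊ = m + 1 := by
    rw [Nat.ceil_eq_iff (Nat.succ_ne_zero m)]
    constructor
    · push_cast [Nat.add_sub_cancel]; linarith
    · push_cast; linarith
  have hexp : ((m : ℝ) + s - ((⌈(m : ℝ) + s⌉₊ - 1 : ℕ) : ℝ)) = s := by
    rw [hceil]; simp
  have hfc : ContDiffOn ℝ (m : ℕ∞) f Ω₁ := by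
    have := hf.1
    rw [hceil] at this
    simpa using this
  set gI := fun i => iteratedFDerivWithin ℝ i f Ω₁ with hgI
  set GI := fun i => iteratedFDerivWithin ℝ i (fun t => f (γ • t)) Ω₅ with hGI
  have hZ : zygNorm ((m : ℝ) + s) Ω₁ f = ∑ i ∈ Finset.range (m + 1), zygBase s Ω₁ (gI i) := by
    have h1 : zygNorm ((m : ℝ) + s) Ω₁ f = ∑ i ∈ Finset.range ⌈(m : ℝ) + s⌉₊,
        zygBase ((m : ℝ) + s - ((⌈(m : ℝ) + s⌉₊ - 1 : ℕ) : ℝ)) Ω₁ (gI i) := rfl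
    rw [h1, hexp, hceil]
  have hL : zygNorm ((m : ℝ) + s) Ω₅ (fun t => f (γ • t)) =
      ∑ i ∈ Finset.range (m + 1), zygBase s Ω₅ (GI i) := by
    have h1 : zygNorm ((m : ℝ) + s) Ω₅ (fun t => f (γ • t)) = ∑ i ∈ Finset.range ⌈(m : ℝ) + s⌉₊,
        zygBase ((m : ℝ) + s - ((⌈(m : ℝ) + s⌉₊ - 1 : ℕ) : ℝ)) Ω₅ (GI i) := rfl
    rw [h1, hexp, hceil]
  set S₁ := ⨆ x ∈ Ω₁, ENNReal.ofReal ‖gI 1 x‖ with hS₁def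
  have hS₁Z : S₁ ≤ zygNorm ((m : ℝ) + s) Ω₁ f := by
    rw [hZ]
    calc S₁ ≤ zygBase s Ω₁ (gI 1) := le_trans le_self_add le_self_add
      _ ≤ _ := Finset.single_le_sum (f := fun i => zygBase s Ω₁ (gI i))
          (fun i _ => zero_le) (Finset.mem_range.2 (by omega))
  have hS₁top : S₁ ≠ ⊤ := ne_top_of_le_ne_top hf.2 hS₁Z
  set C := S₁.toReal with hCdef
  have hC0 : 0 ≤ C := ENNReal.toReal_nonneg
  have hofC : ENNReal.ofReal C ≤ S₁ := le_of_eq (ENNReal.ofReal_toReal hS₁top)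
  have hCb : ∀ u ∈ Ω₁, ‖fderivWithin ℝ f Ω₁ u‖ ≤ C := by
    intro u hu
    have h1 : ‖fderivWithin ℝ f Ω₁ u‖ = ‖gI 1 u‖ := by
      rw [hgI]
      rw [← norm_iteratedFDerivWithin_fderivWithin isOpen_ball.uniqueDiffOn hu,
        norm_iteratedFDerivWithin_zero]
    rw [h1]
    have h2 : ENNReal.ofReal ‖gI 1 u‖ ≤ S₁ :=
      le_iSup₂ (f := fun x (_ : x ∈ Ω₁) => ENNReal.ofReal ‖gI 1 x‖) u hu
    have h3 := ENNReal.toReal_mono hS₁top h2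
    rwa [ENNReal.toReal_ofReal (norm_nonneg _)] at h3
  have hdiffOn : DifferentiableOn ℝ f Ω₁ :=
    hfc.differentiableOn (by exact_mod_cast (show m ≠ 0 by omega))
  have hlip : ∀ u ∈ Ω₁, ∀ w ∈ Ω₁, ‖f w - f u‖ ≤ C * ‖w - u‖ := fun u hu w hw =>
    (convex_ball (0 : EuclideanSpace ℝ (Fin n)) η₁).norm_image_sub_le_of_norm_fderivWithin_le hdiffOn hCb hu hw
  have hterm : ∀ i ∈ Finset.range m, zygBase s Ω₅ (GI (i + 1)) ≤
      ENNReal.ofReal γ * zygBase s Ω₁ (gI (i + 1)) := fun i hi =>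
    zygBase_term_le hγ0 hγ1 h5γ hs0 f m hfc (Nat.succ_le_succ (Nat.zero_le i))
      (Finset.mem_range.1 hi)
  have h0 : zygBase s Ω₅ (GI 0) ≤ ENNReal.ofReal (40 * (C * γ)) :=
    zygBase_zero_le hη₁ hγ0 h5γ hs0 hs1 f hf0 hC0 hlip
  have hsum1 : (∑ i ∈ Finset.range m, zygBase s Ω₁ (gI (i + 1))) ≤
      ∑ i ∈ Finset.range (m + 1), zygBase s Ω₁ (gI i) := by
    rw [Finset.sum_range_succ']
    exact le_self_add
  have hS₁Z' : S₁ ≤ ∑ i ∈ Finset.range (m + 1), zygBase s Ω₁ (gI i) := by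
    rw [← hZ]; exact hS₁Z
  rw [hL, hZ, Finset.sum_range_succ']
  calc (∑ i ∈ Finset.range m, zygBase s Ω₅ (GI (i + 1))) + zygBase s Ω₅ (GI 0)
      ≤ (∑ i ∈ Finset.range m, ENNReal.ofReal γ * zygBase s Ω₁ (gI (i + 1))) +
        ENNReal.ofReal (40 * (C * γ)) := add_le_add (Finset.sum_le_sum hterm) h0
    _ = ENNReal.ofReal γ * (∑ i ∈ Finset.range m, zygBase s Ω₁ (gI (i + 1))) +
        ENNReal.ofReal (40 * γ) * ENNReal.ofReal C := by
        rw [← Finset.mul_sum]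
        congr 1
        rw [show (40 : ℝ) * (C * γ) = (40 * γ) * C by ring,
          ENNReal.ofReal_mul (by positivity)]
    _ ≤ ENNReal.ofReal γ * (∑ i ∈ Finset.range (m + 1), zygBase s Ω₁ (gI i)) +
        ENNReal.ofReal (40 * γ) * (∑ i ∈ Finset.range (m + 1), zygBase s Ω₁ (gI i)) :=
        add_le_add (mul_le_mul_right hsum1 _) (mul_le_mul_right (hofC.trans hS₁Z') _)
    _ = (ENNReal.ofReal γ + ENNReal.ofReal (40 * γ)) *
        (∑ i ∈ Finset.range (m + 1), zygBase s Ω₁ (gI i)) := (add_mul _ _ _).symm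
    _ = ENNReal.ofReal (γ + 40 * γ) *
        (∑ i ∈ Finset.range (m + 1), zygBase s Ω₁ (gI i)) := by
        rw [ENNReal.ofReal_add hγ0.le (by positivity)]
    _ ≤ ENNReal.ofReal (91 * γ) *
        (∑ i ∈ Finset.range (m + 1), zygBase s Ω₁ (gI i)) :=
        mul_le_mul_left (ENNReal.ofReal_le_ofReal (by linarith)) _
end
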